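/- Let Q and H be irreducible stochastic kernels on a countable space S related by Q(x,y) = H(x,y) + Γ(x,y)/(2π(x)), both satisfying the symmetric structure condition, with Γ skew-symmetric and Γ(x,y) ≥ −π(y)Q(y,x). Let P₁ be the NRMH kernel with proposal Q and vorticity Γ, and let P₂(x,y) = K(x,y) + Γ(x,y)/(2π(x)), where K is the classical Metropolis–Hastings kernel with proposal H and target π. Then P₁(x,y) = P₂(x,y) for all x ≠ y with Q(x,y) ≠ 0; in fact π(x)P₁(x,y) = min(π(x)H(x,y), π(y)H(y,x)) + Γ(x,y)/2. -/

import Mathlib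

open scoped Classical

/-- equivalence of NRMH (proposal Q = H + Γ/(2π)) and the additive
construction P₂ = K + Γ/(2π) with K the classical MH kernel for proposal H. -/
theorem nrmh_equals_additive_construction
    (S : Type*) [Countable S]
    (Q H : S → S → ℝ) (Γ : S → S → ℝ) (π : S → ℝ)
    (hQnonneg : ∀ x y, 0 ≤ Q x y) (hQrow : ∀ x, ∑' y, Q x y = 1)
    (hHnonneg : ∀ x y, 0 ≤ H x y) (hHrow : ∀ x, ∑' y, H x y = 1)
    (hQirr : ∀ x y, Relation.ReflTransGen (fun a b => 0 < Q a b) x y)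
    (hHirr : ∀ x y, Relation.ReflTransGen (fun a b => 0 < H a b) x y)
    (hQsym : ∀ x y, Q x y = 0 → Q y x = 0)
    (hHsym : ∀ x y, H x y = 0 → H y x = 0)
    (hΓskew : ∀ x y, Γ x y = - Γ y x)
    (hπpos : ∀ x, 0 < π x)
    (hrel : ∀ x y, Q x y = H x y + Γ x y / (2 * π x))
    (hbound : ∀ x y, Γ x y ≥ - (π y * Q y x))
    (RΓ K P₁ P₂ : S → S → ℝ)
    (hRΓ : ∀ x y, RΓ x y =
      if π x * Q x y = 0 then 1 else (Γ x y + π y * Q y x) / (π x * Q x y))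
    (hP₁ : ∀ x y, x ≠ y → P₁ x y = Q x y * min 1 (RΓ x y))
    (hK : ∀ x y, x ≠ y → K x y =
      H x y * min 1 (if π x * H x y = 0 then 1
        else (π y * H y x) / (π x * H x y)))
    (hP₂ : ∀ x y, x ≠ y → P₂ x y = K x y + Γ x y / (2 * π x)) :
    ∀ x y, x ≠ y → Q x y ≠ 0 →
      π x * P₁ x y = min (π x * H x y) (π y * H y x) + Γ x y / 2 ∧
      P₁ x y = P₂ x y := by
  intro x y hxy hQ
  have hπx := hπpos x
  have hπy := hπpos y
  have hQpos : 0 < Q x y := lt_of_le_of_ne (hQnonneg x y) (Ne.symm hQ)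
  have ha : 0 < π x * Q x y := mul_pos hπx hQpos
  have hR : RΓ x y = (Γ x y + π y * Q y x) / (π x * Q x y) := by
    rw [hRΓ]; simp [ha.ne']
  have h1 : π x * Q x y = π x * H x y + Γ x y / 2 := by
    rw [hrel x y]; field_simp
  have h2 : Γ x y + π y * Q y x = π y * H y x + Γ x y / 2 := by
    rw [hrel y x, hΓskew x y]; field_simp; ring
  have key : π x * P₁ x y = min (π x * Q x y) (Γ x y + π y * Q y x) := by
    rw [hP₁ x y hxy, hR, ← mul_assoc, mul_min_of_nonneg _ _ ha.le, mul_one,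
      mul_div_cancel₀ _ ha.ne']
  have hmin : π x * P₁ x y = min (π x * H x y) (π y * H y x) + Γ x y / 2 := by
    rw [key, h1, h2, min_add_add_right]
  refine ⟨hmin, ?_⟩
  have hK' : π x * K x y = min (π x * H x y) (π y * H y x) := by
    rw [hK x y hxy]
    by_cases h : π x * H x y = 0
    · have hH0 : H x y = 0 := by
        rcases mul_eq_zero.mp h with h' | h'
        · exact absurd h' hπx.ne'
        · exact h'
      have hH0' : H y x = 0 := hHsym x y hH0
      simp [h, hH0, hH0']
    · have hpos : 0 < π x * H x y :=
        lt_of_le_of_ne (mul_nonneg hπx.le (hHnonneg x y)) (Ne.symm h)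
      rw [if_neg h, ← mul_assoc, mul_min_of_nonneg _ _ hpos.le, mul_one,
        mul_div_cancel₀ _ h]
  have : π x * P₁ x y = π x * P₂ x y := by
    rw [hmin, hP₂ x y hxy, mul_add, hK']
    congr 1
    field_simp
  exact mul_left_cancel₀ hπx.ne' this
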